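/- There exists δ ∈ (0,1) such that the following holds. Let α > 1, β = 4/(α+3), γ = 2(α−1)/(α+3), α₁ = β + γ = (2α+2)/(α+3), and let k be a positive integer with 2⌈2^{βk}⌉ ≤ 2^k and 2^{(α₁−1)k−2} ≥ 2. Set W₀ = {x ∈ ℍ : x₂ − ⌈2^{βk}⌉ ≥ |x₁| · 2^{−γk}}. Then the simple random walk started at (0, 2^k) satisfies P_{(0,2^k)}(τ̄_{L_{2^{k+1}}} ≤ τ̄_{ℤ² \ W₀}) ≥ 1/2 − 2^{(β−1)k+1} − (1−δ)^{2^{(α₁−1)k−2}}. -/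

import Mathlib

open Filter

namespace SHM

/-- The upper half planar lattice `ℍ = {(x₁,x₂) ∈ ℤ² : x₂ ≥ 0}` (including the x-axis). -/
def upperH : Set (ℤ × ℤ) := {p | 0 ≤ p.2}

/-- The horizontal line `L_n = {(x,n) : x ∈ ℤ}` of height `n`. -/
def lineH (n : ℤ) : Set (ℤ × ℤ) := {p | p.2 = n}

/-- The four unit steps of the planar simple random walk. -/
def dirs : Finset (ℤ × ℤ) := {(1,0), (-1,0), (0,1), (0,-1)}

/-- The position after `m` steps of the walk started at `z` whose first `n`
increments are given by `σ`. -/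
def pos (z : ℤ × ℤ) {n : ℕ} (σ : Fin n → ℤ × ℤ) (m : ℕ) : ℤ × ℤ :=
  z + ∑ i ∈ Finset.univ.filter (fun i : Fin n => (i : ℕ) < m), σ i

/-- The probability that the first `n` increments of the simple random walk
(each uniform on the four unit vectors) satisfy the predicate `E`. -/
noncomputable def stepProb (n : ℕ) (E : (Fin n → ℤ × ℤ) → Prop) : ℝ :=
  (Nat.card {σ : Fin n → ↥dirs // E fun i => ((σ i : ℤ × ℤ))} : ℝ) / 4 ^ n

/-- `P_z(S_{τ̄_A} = x)` : the walk started at `z` hits `A` (in finite time) for the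
first time precisely at the point `x`.  Here `τ̄_A = min {m ≥ 0 : S_m ∈ A}`. -/
noncomputable def hitProb (z : ℤ × ℤ) (A : Set (ℤ × ℤ)) (x : ℤ × ℤ) : ℝ :=
  ∑' n : ℕ, stepProb n fun σ =>
    pos z σ n = x ∧ x ∈ A ∧ ∀ m < n, pos z σ m ∉ A

/-- `P_z(τ̄_A < τ̄_B)` : the walk started at `z` hits `A` strictly before hitting `B`. -/
noncomputable def hitBeforeProb (z : ℤ × ℤ) (A B : Set (ℤ × ℤ)) : ℝ :=
  ∑' n : ℕ, stepProb n fun σ =>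
    pos z σ n ∈ A ∧ pos z σ n ∉ B ∧ ∀ m < n, pos z σ m ∉ A ∧ pos z σ m ∉ B

/-- The stationary harmonic measure `H_{B,N}(x) = Σ_{z ∈ L_N \ B} P_z(S_{τ̄_{B ∪ L₀}} = x)`. -/
noncomputable def harm (B : Set (ℤ × ℤ)) (N : ℕ) (x : ℤ × ℤ) : ℝ :=
  ∑' z : ↥(lineH (N : ℤ) \ B), hitProb (z : ℤ × ℤ) (B ∪ lineH 0) x

/-- `P_z(τ̄_A ≤ τ̄_B)` : the walk started at `z` hits `A` (in finite time) no later than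
it hits `B`. -/
noncomputable def hitLeProb (z : ℤ × ℤ) (A B : Set (ℤ × ℤ)) : ℝ :=
  ∑' n : ℕ, stepProb n fun σ =>
    pos z σ n ∈ A ∧ ∀ m < n, pos z σ m ∉ A ∧ pos z σ m ∉ B

/-- The linear wedge `W₀ = {x ∈ ℍ : x₂ − ⌈2^{βk}⌉ ≥ |x₁|·2^{−γk}}`. -/
def wedgeW₀ (β γ : ℝ) (k : ℕ) : Set (ℤ × ℤ) :=
  {x ∈ upperH | |(x.1 : ℝ)| * (2 : ℝ) ^ (-(γ * k)) ≤ (x.2 : ℝ) - (⌈(2 : ℝ) ^ (β * k)⌉ : ℝ)}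

section Aux
variable (z : ℤ × ℤ)

def vmap {n : ℕ} (σ : Fin n → ↥dirs) : Fin n → ℤ × ℤ := fun i => (σ i : ℤ × ℤ)

lemma pos_zero {n : ℕ} (σ : Fin n → ℤ × ℤ) : pos z σ 0 = z := by
  simp [pos]

lemma pos_succ {n : ℕ} (σ : Fin n → ℤ × ℤ) {m : ℕ} (h : m < n) :
    pos z σ (m + 1) = pos z σ m + σ ⟨m, h⟩ := by
  have hfil : Finset.univ.filter (fun i : Fin n => (i : ℕ) < m + 1)
      = insert ⟨m, h⟩ (Finset.univ.filter (fun i : Fin n => (i : ℕ) < m)) := by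
    ext i
    simp only [Finset.mem_filter, Finset.mem_univ, true_and, Finset.mem_insert,
      Nat.lt_succ_iff_lt_or_eq, Fin.ext_iff]
    tauto
  rw [pos, hfil, Finset.sum_insert (by simp), pos]
  abel

lemma pos_snoc {n : ℕ} (σ : Fin n → ℤ × ℤ) (d : ℤ × ℤ) {m : ℕ} (h : m ≤ n) :
    pos z (Fin.snoc σ d) m = pos z σ m := by
  rw [pos, pos, Finset.sum_filter, Finset.sum_filter, Fin.sum_univ_castSucc]
  simp [Fin.coe_castSucc, Fin.snoc_castSucc, Fin.val_last, Nat.not_lt.mpr h]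

lemma pos_snoc_last {n : ℕ} (σ : Fin n → ℤ × ℤ) (d : ℤ × ℤ) :
    pos z (Fin.snoc σ d) (n + 1) = pos z σ n + d := by
  rw [pos_succ z _ (Nat.lt_succ_self n),
    show (⟨n, Nat.lt_succ_self n⟩ : Fin (n+1)) = Fin.last n from rfl,
    Fin.snoc_last, pos_snoc z σ d (le_refl n)]

lemma vmap_snoc {n : ℕ} (σ : Fin n → ↥dirs) (d : ↥dirs) :
    vmap (Fin.snoc σ d) = Fin.snoc (vmap σ) (d : ℤ × ℤ) := by
  have : vmap (Fin.snoc σ d) = (fun x : ↥dirs => (x : ℤ × ℤ)) ∘ (Fin.snoc σ d) := rfl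
  rw [this, Fin.comp_snoc]; rfl

def snocEquiv (α : Type*) (n : ℕ) : ((Fin n → α) × α) ≃ (Fin (n+1) → α) where
  toFun p := Fin.snoc p.1 p.2
  invFun f := (Fin.init f, f (Fin.last n))
  left_inv p := by simp
  right_inv f := by simp

open Classical in
lemma stepProb_eq_sum (n : ℕ) (E : (Fin n → ℤ × ℤ) → Prop) :
    stepProb n E = (∑ σ : Fin n → ↥dirs, if E (vmap σ) then (1:ℝ) else 0) / 4 ^ n := by
  classical
  rw [stepProb, Nat.card_eq_fintype_card, Fintype.card_subtype]
  congr 1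
  rw [Finset.card_filter]
  push_cast
  refine Finset.sum_congr rfl fun σ _ => ?_
  by_cases h : E (vmap σ)
  · rw [if_pos h, if_pos]; exact h
  · rw [if_neg h, if_neg]; exact h

lemma stepProb_nonneg (n : ℕ) (E : (Fin n → ℤ × ℤ) → Prop) : 0 ≤ stepProb n E := by
  unfold stepProb; positivity

lemma sum_dirs_expand (f : ℤ × ℤ → ℝ) :
    ∑ d ∈ dirs, f d = f (1,0) + f (-1,0) + f (0,1) + f (0,-1) := by
  rw [show dirs = insert ((1:ℤ),(0:ℤ)) (insert (-1,0) (insert (0,1) {(0,-1)})) from rfl]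
  rw [Finset.sum_insert (by decide), Finset.sum_insert (by decide),
    Finset.sum_insert (by decide), Finset.sum_singleton]
  ring

lemma dirs_card : dirs.card = 4 := by decide

variable (A B : Set (ℤ × ℤ))

open Classical in
/-- sum of `u` over paths alive (inside `Aᶜ ∩ Bᶜ`) up to time `n`. -/
noncomputable def SA (u : ℤ × ℤ → ℝ) (n : ℕ) : ℝ :=
  ∑ σ : Fin n → ↥dirs,
    if (∀ m ≤ n, pos z (vmap σ) m ∉ A ∧ pos z (vmap σ) m ∉ B)
    then u (pos z (vmap σ) n) else 0

open Classical in
/-- sum of `u` over paths that first hit `A∪B` at time `n`, in `A`. -/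
noncomputable def SH (u : ℤ × ℤ → ℝ) (n : ℕ) : ℝ :=
  ∑ σ : Fin n → ↥dirs,
    if (pos z (vmap σ) n ∈ A ∧ ∀ m < n, pos z (vmap σ) m ∉ A ∧ pos z (vmap σ) m ∉ B)
    then u (pos z (vmap σ) n) else 0

open Classical in
/-- sum of `u` over paths that first hit `A∪B` at time `n`, in `B \ A`. -/
noncomputable def SB (u : ℤ × ℤ → ℝ) (n : ℕ) : ℝ :=
  ∑ σ : Fin n → ↥dirs,
    if ((pos z (vmap σ) n ∉ A ∧ pos z (vmap σ) n ∈ B)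
        ∧ ∀ m < n, pos z (vmap σ) m ∉ A ∧ pos z (vmap σ) m ∉ B)
    then u (pos z (vmap σ) n) else 0

variable {Ginv : Set (ℤ × ℤ)}

lemma alive_mem_Ginv (hzI : z ∈ Ginv)
    (hIcl : ∀ p ∈ Ginv, ∀ d ∈ dirs, p + d ∉ A → p + d ∉ B → p + d ∈ Ginv)
    {n : ℕ} (σ : Fin n → ↥dirs) {m : ℕ} (hm : m ≤ n)
    (hal : ∀ m' ≤ m, pos z (vmap σ) m' ∉ A ∧ pos z (vmap σ) m' ∉ B) :
    pos z (vmap σ) m ∈ Ginv := by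
  induction m with
  | zero => rw [pos_zero]; exact hzI
  | succ m ih =>
    have hmn : m < n := hm
    have hstep : pos z (vmap σ) (m+1) = pos z (vmap σ) m + vmap σ ⟨m, hmn⟩ :=
      pos_succ z (vmap σ) hmn
    have hprev : pos z (vmap σ) m ∈ Ginv :=
      ih (le_of_lt hmn) (fun m' hm' => hal m' (le_trans hm' (Nat.le_succ m)))
    have hcur := hal (m+1) (le_refl _)
    rw [hstep] at hcur ⊢
    exact hIcl _ hprev _ (σ ⟨m, hmn⟩).2 hcur.1 hcur.2

open Classical in
lemma SA_step (u : ℤ × ℤ → ℝ) (hzI : z ∈ Ginv)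
    (hIcl : ∀ p ∈ Ginv, ∀ d ∈ dirs, p + d ∉ A → p + d ∉ B → p + d ∈ Ginv)
    (hharm : ∀ p ∈ Ginv, ∑ d ∈ dirs, u (p + d) = 4 * u p) (n : ℕ) :
    4 * SA z A B u n = SA z A B u (n+1) + SH z A B u (n+1) + SB z A B u (n+1) := by
  classical
  -- first, rewrite the RHS as a single sum with condition "alive up to n"
  have key : SA z A B u (n+1) + SH z A B u (n+1) + SB z A B u (n+1)
      = ∑ σ : Fin (n+1) → ↥dirs,
          if (∀ m ≤ n, pos z (vmap σ) m ∉ A ∧ pos z (vmap σ) m ∉ B)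
          then u (pos z (vmap σ) (n+1)) else 0 := by
    rw [SA, SH, SB, ← Finset.sum_add_distrib, ← Finset.sum_add_distrib]
    refine Finset.sum_congr rfl fun σ _ => ?_
    have heq1 : (∀ m ≤ n+1, pos z (vmap σ) m ∉ A ∧ pos z (vmap σ) m ∉ B)
        ↔ ((∀ m ≤ n, pos z (vmap σ) m ∉ A ∧ pos z (vmap σ) m ∉ B)
            ∧ (pos z (vmap σ) (n+1) ∉ A ∧ pos z (vmap σ) (n+1) ∉ B)) := by
      constructor
      · exact fun h => ⟨fun m hm => h m (le_trans hm (Nat.le_succ n)), h (n+1) (le_refl _)⟩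
      · rintro ⟨h1, h2⟩ m hm
        rcases Nat.lt_succ_iff_lt_or_eq.mp (Nat.lt_succ_of_le hm) with h | h
        · exact h1 m (Nat.lt_succ_iff.mp h)
        · rw [h]; exact h2
    have heq2 : (∀ m < n+1, pos z (vmap σ) m ∉ A ∧ pos z (vmap σ) m ∉ B)
        ↔ (∀ m ≤ n, pos z (vmap σ) m ∉ A ∧ pos z (vmap σ) m ∉ B) := by
      constructor
      · exact fun h m hm => h m (Nat.lt_succ_of_le hm)
      · exact fun h m hm => h m (Nat.lt_succ_iff.mp hm)
    simp only [heq1, heq2]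
    by_cases hpre : ∀ m ≤ n, pos z (vmap σ) m ∉ A ∧ pos z (vmap σ) m ∉ B
    · by_cases hA' : pos z (vmap σ) (n+1) ∈ A
      · simp [hpre, hA']
      · by_cases hB' : pos z (vmap σ) (n+1) ∈ B <;> simp [hpre, hA', hB']
    · simp [hpre]
  rw [key, ← Equiv.sum_comp (snocEquiv ↥dirs n), Fintype.sum_prod_type]
  rw [SA, Finset.mul_sum]
  refine Finset.sum_congr rfl fun σ _ => ?_
  rw [show (snocEquiv (↥dirs) n : _ → _) = fun p => Fin.snoc p.1 p.2 from rfl]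
  simp only [snocEquiv, Equiv.coe_fn_mk]
  have h1 : ∀ (y : ↥dirs) (m : ℕ), m ≤ n →
      pos z (vmap (Fin.snoc σ y)) m = pos z (vmap σ) m := fun y m hm => by
    rw [vmap_snoc, pos_snoc z _ _ hm]
  have h2 : ∀ y : ↥dirs, pos z (vmap (Fin.snoc σ y)) (n+1)
      = pos z (vmap σ) n + (y : ℤ × ℤ) := fun y => by
    rw [vmap_snoc, pos_snoc_last]
  have halive_iff : ∀ y : ↥dirs,
      ((∀ m ≤ n, pos z (vmap (Fin.snoc σ y)) m ∉ A ∧ pos z (vmap (Fin.snoc σ y)) m ∉ B)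
        ↔ (∀ m ≤ n, pos z (vmap σ) m ∉ A ∧ pos z (vmap σ) m ∉ B)) := by
    refine fun y => forall₂_congr (fun m hm => ?_)
    rw [h1 y m hm]
  have hterm : ∀ y : ↥dirs,
      (if (∀ m ≤ n, pos z (vmap (Fin.snoc σ y)) m ∉ A ∧ pos z (vmap (Fin.snoc σ y)) m ∉ B)
        then u (pos z (vmap (Fin.snoc σ y)) (n+1)) else 0)
      = (if (∀ m ≤ n, pos z (vmap σ) m ∉ A ∧ pos z (vmap σ) m ∉ B)
        then u (pos z (vmap σ) n + (y : ℤ × ℤ)) else 0) :=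
    fun y => if_congr (halive_iff y) (by rw [h2 y]) rfl
  rw [Finset.sum_congr rfl fun y _ => hterm y]
  by_cases hC : ∀ m ≤ n, pos z (vmap σ) m ∉ A ∧ pos z (vmap σ) m ∉ B
  · simp only [if_pos hC]
    rw [Finset.sum_coe_sort dirs (fun d => u (pos z (vmap σ) n + d)),
      hharm _ (alive_mem_Ginv z A B hzI hIcl σ le_rfl hC)]
  · simp [hC]


open Classical in
lemma SA_zero (u : ℤ × ℤ → ℝ) (hzA : z ∉ A) (hzB : z ∉ B) : SA z A B u 0 = u z := by
  classical
  rw [SA, Fintype.sum_unique]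
  have hcond : ∀ m ≤ 0, pos z (vmap (default : Fin 0 → ↥dirs)) m ∉ A
      ∧ pos z (vmap (default : Fin 0 → ↥dirs)) m ∉ B := by
    intro m hm
    rw [Nat.le_zero.mp hm, pos_zero]
    exact ⟨hzA, hzB⟩
  rw [if_pos hcond, pos_zero]

lemma telescope (u : ℤ × ℤ → ℝ) (hzA : z ∉ A) (hzB : z ∉ B) (hzI : z ∈ Ginv)
    (hIcl : ∀ p ∈ Ginv, ∀ d ∈ dirs, p + d ∉ A → p + d ∉ B → p + d ∈ Ginv)
    (hharm : ∀ p ∈ Ginv, ∑ d ∈ dirs, u (p + d) = 4 * u p) (N : ℕ) :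
    u z = SA z A B u N / 4 ^ N
      + ∑ j ∈ Finset.range N, (SH z A B u (j+1) + SB z A B u (j+1)) / 4 ^ (j+1) := by
  induction N with
  | zero => simp [SA_zero z A B u hzA hzB]
  | succ N ih =>
    rw [Finset.sum_range_succ, ih]
    have hstep := SA_step z A B u hzI hIcl hharm N
    have h4 : (0:ℝ) < 4 ^ N := by positivity
    have h4' : (0:ℝ) < 4 ^ (N+1) := by positivity
    have : SA z A B u N = (SA z A B u (N+1) + SH z A B u (N+1) + SB z A B u (N+1)) / 4 := by
      rw [eq_div_iff (by norm_num)]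
      linarith [hstep]
    rw [this]
    field_simp
    ring

open Classical in
lemma SA_le_SA (u v : ℤ × ℤ → ℝ) (hzI : z ∈ Ginv)
    (hIcl : ∀ p ∈ Ginv, ∀ d ∈ dirs, p + d ∉ A → p + d ∉ B → p + d ∈ Ginv)
    (huv : ∀ p ∈ Ginv, u p ≤ v p) (n : ℕ) : SA z A B u n ≤ SA z A B v n := by
  classical
  refine Finset.sum_le_sum fun σ _ => ?_
  by_cases hC : ∀ m ≤ n, pos z (vmap σ) m ∉ A ∧ pos z (vmap σ) m ∉ B
  · rw [if_pos hC, if_pos hC]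
    exact huv _ (alive_mem_Ginv z A B hzI hIcl σ le_rfl hC)
  · rw [if_neg hC, if_neg hC]

open Classical in
lemma SA_g_decay (g : ℤ × ℤ → ℝ) (ρ : ℝ) (hzI : z ∈ Ginv)
    (hIcl : ∀ p ∈ Ginv, ∀ d ∈ dirs, p + d ∉ A → p + d ∉ B → p + d ∈ Ginv)
    (hgeig : ∀ p ∈ Ginv, ∑ d ∈ dirs, g (p + d) = (4 * ρ) * g p)
    (hgnn : ∀ p ∈ Ginv, ∀ d ∈ dirs, 0 ≤ g (p + d)) (n : ℕ) :
    SA z A B g (n+1) ≤ (4 * ρ) * SA z A B g n := by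
  classical
  rw [SA, ← Equiv.sum_comp (snocEquiv ↥dirs n), Fintype.sum_prod_type, SA, Finset.mul_sum]
  refine Finset.sum_le_sum fun σ _ => ?_
  rw [show (snocEquiv (↥dirs) n : _ → _) = fun p => Fin.snoc p.1 p.2 from rfl]
  simp only [snocEquiv, Equiv.coe_fn_mk]
  have h1 : ∀ (y : ↥dirs) (m : ℕ), m ≤ n →
      pos z (vmap (Fin.snoc σ y)) m = pos z (vmap σ) m := fun y m hm => by
    rw [vmap_snoc, pos_snoc z _ _ hm]
  have h2 : ∀ y : ↥dirs, pos z (vmap (Fin.snoc σ y)) (n+1)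
      = pos z (vmap σ) n + (y : ℤ × ℤ) := fun y => by
    rw [vmap_snoc, pos_snoc_last]
  by_cases hC : ∀ m ≤ n, pos z (vmap σ) m ∉ A ∧ pos z (vmap σ) m ∉ B
  · have hGmem := alive_mem_Ginv z A B hzI hIcl σ le_rfl hC
    rw [if_pos hC, ← hgeig _ hGmem,
      ← Finset.sum_coe_sort dirs (fun d => g (pos z (vmap σ) n + d))]
    refine Finset.sum_le_sum fun y _ => ?_
    by_cases hy : ∀ m ≤ n+1, pos z (vmap (Fin.snoc σ y)) m ∉ A ∧ pos z (vmap (Fin.snoc σ y)) m ∉ B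
    · rw [if_pos hy, h2 y]
    · rw [if_neg hy]
      exact hgnn _ hGmem _ y.2
  · have : ∀ y : ↥dirs, ¬(∀ m ≤ n+1, pos z (vmap (Fin.snoc σ y)) m ∉ A
        ∧ pos z (vmap (Fin.snoc σ y)) m ∉ B) := by
      intro y hy
      exact hC fun m hm => by rw [← h1 y m hm]; exact hy m (le_trans hm (Nat.le_succ n))
    simp only [if_neg hC, if_neg (this _)]
    simp


open Classical in
lemma SH_le_one (u : ℤ × ℤ → ℝ) (hzI : z ∈ Ginv)
    (hIcl : ∀ p ∈ Ginv, ∀ d ∈ dirs, p + d ∉ A → p + d ∉ B → p + d ∈ Ginv)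
    (hA1 : ∀ p ∈ Ginv, ∀ d ∈ dirs, p + d ∈ A → u (p + d) ≤ 1) (n : ℕ) :
    SH z A B u (n+1) ≤ SH z A B (fun _ => 1) (n+1) := by
  classical
  refine Finset.sum_le_sum fun σ _ => ?_
  by_cases hC : pos z (vmap σ) (n+1) ∈ A
      ∧ ∀ m < n+1, pos z (vmap σ) m ∉ A ∧ pos z (vmap σ) m ∉ B
  · rw [if_pos hC, if_pos hC]
    have hprev : pos z (vmap σ) n ∈ Ginv :=
      alive_mem_Ginv z A B hzI hIcl σ (Nat.le_succ n)
        (fun m' hm' => hC.2 m' (Nat.lt_succ_of_le hm'))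
    have hpt : pos z (vmap σ) (n+1) = pos z (vmap σ) n + vmap σ ⟨n, Nat.lt_succ_self n⟩ :=
      pos_succ z (vmap σ) (Nat.lt_succ_self n)
    rw [hpt] at hC ⊢
    exact hA1 _ hprev _ (σ ⟨n, Nat.lt_succ_self n⟩).2 hC.1
  · rw [if_neg hC, if_neg hC]

open Classical in
lemma SB_nonpos (u : ℤ × ℤ → ℝ) (hzI : z ∈ Ginv)
    (hIcl : ∀ p ∈ Ginv, ∀ d ∈ dirs, p + d ∉ A → p + d ∉ B → p + d ∈ Ginv)
    (hB0 : ∀ p ∈ Ginv, ∀ d ∈ dirs, p + d ∉ A → p + d ∈ B → u (p + d) ≤ 0) (n : ℕ) :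
    SB z A B u (n+1) ≤ 0 := by
  classical
  refine Finset.sum_nonpos fun σ _ => ?_
  by_cases hC : (pos z (vmap σ) (n+1) ∉ A ∧ pos z (vmap σ) (n+1) ∈ B)
      ∧ ∀ m < n+1, pos z (vmap σ) m ∉ A ∧ pos z (vmap σ) m ∉ B
  · rw [if_pos hC]
    have hprev : pos z (vmap σ) n ∈ Ginv :=
      alive_mem_Ginv z A B hzI hIcl σ (Nat.le_succ n)
        (fun m' hm' => hC.2 m' (Nat.lt_succ_of_le hm'))
    have hpt : pos z (vmap σ) (n+1) = pos z (vmap σ) n + vmap σ ⟨n, Nat.lt_succ_self n⟩ :=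
      pos_succ z (vmap σ) (Nat.lt_succ_self n)
    rw [hpt] at hC ⊢
    exact hB0 _ hprev _ (σ ⟨n, Nat.lt_succ_self n⟩).2 hC.1.1 hC.1.2
  · rw [if_neg hC]

open Classical in
lemma SH_one_eq (n : ℕ) :
    stepProb n (fun σ => pos z σ n ∈ A ∧ ∀ m < n, pos z σ m ∉ A ∧ pos z σ m ∉ B)
      = SH z A B (fun _ => (1:ℝ)) n / 4 ^ n := by
  classical
  rw [stepProb_eq_sum, SH]
  congr 1
  refine Finset.sum_congr rfl fun σ _ => ?_
  by_cases h : pos z (vmap σ) n ∈ A ∧ ∀ m < n, pos z (vmap σ) m ∉ A ∧ pos z (vmap σ) m ∉ B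
  · rw [if_pos h, if_pos h]
  · rw [if_neg h, if_neg h]

open Classical in
lemma SH_one_nonneg (n : ℕ) : 0 ≤ SH z A B (fun _ => (1:ℝ)) n := by
  classical
  refine Finset.sum_nonneg fun σ _ => ?_
  split_ifs <;> norm_num

open Classical in
lemma SB_one_nonneg (n : ℕ) : 0 ≤ SB z A B (fun _ => (1:ℝ)) n := by
  classical
  refine Finset.sum_nonneg fun σ _ => ?_
  split_ifs <;> norm_num

open Classical in
lemma SA_one_nonneg (n : ℕ) : 0 ≤ SA z A B (fun _ => (1:ℝ)) n := by
  classical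
  refine Finset.sum_nonneg fun σ _ => ?_
  split_ifs <;> norm_num

open Classical in
lemma SA_two_smul (g : ℤ × ℤ → ℝ) (n : ℕ) :
    SA z A B (fun p => 2 * g p) n = 2 * SA z A B g n := by
  classical
  rw [SA, SA, Finset.mul_sum]
  refine Finset.sum_congr rfl fun σ _ => ?_
  split_ifs <;> ring

theorem engine_le (u g : ℤ × ℤ → ℝ) (ρ : ℝ)
    (hρ0 : 0 ≤ ρ) (hρ1 : ρ < 1)
    (hzA : z ∉ A) (hzB : z ∉ B) (hzI : z ∈ Ginv)
    (hIcl : ∀ p ∈ Ginv, ∀ d ∈ dirs, p + d ∉ A → p + d ∉ B → p + d ∈ Ginv)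
    (hharm : ∀ p ∈ Ginv, ∑ d ∈ dirs, u (p + d) = 4 * u p)
    (hgeig : ∀ p ∈ Ginv, ∑ d ∈ dirs, g (p + d) = (4 * ρ) * g p)
    (hgnn : ∀ p ∈ Ginv, ∀ d ∈ dirs, 0 ≤ g (p + d))
    (hu2g : ∀ p ∈ Ginv, u p ≤ 2 * g p)
    (hgz : g z ≤ 1)
    (hA1 : ∀ p ∈ Ginv, ∀ d ∈ dirs, p + d ∈ A → u (p + d) ≤ 1)
    (hB0 : ∀ p ∈ Ginv, ∀ d ∈ dirs, p + d ∉ A → p + d ∈ B → u (p + d) ≤ 0) :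
    u z ≤ hitLeProb z A B := by
  classical
  have heP_nn : ∀ n, 0 ≤ stepProb n
      (fun σ => pos z σ n ∈ A ∧ ∀ m < n, pos z σ m ∉ A ∧ pos z σ m ∉ B) :=
    fun n => stepProb_nonneg _ _
  have heP0 : stepProb 0
      (fun σ : Fin 0 → ℤ × ℤ => pos z σ 0 ∈ A ∧ ∀ m < 0, pos z σ m ∉ A ∧ pos z σ m ∉ B) = 0 := by
    rw [stepProb_eq_sum, Fintype.sum_unique, if_neg]
    · simp
    · rw [pos_zero]
      intro h
      exact hzA h.1
  have hharm1 : ∀ p ∈ Ginv, ∑ d ∈ dirs, (fun _ : ℤ × ℤ => (1:ℝ)) (p + d) = 4 * 1 := by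
    intro p _
    rw [Finset.sum_const, dirs_card]
    norm_num
  -- partial sums of eP are at most 1
  have hpart : ∀ N, ∑ j ∈ Finset.range N,
      stepProb j (fun σ => pos z σ j ∈ A ∧ ∀ m < j, pos z σ m ∉ A ∧ pos z σ m ∉ B) ≤ 1 := by
    intro N
    cases N with
    | zero => simp
    | succ N =>
      rw [Finset.sum_range_succ']
      have htel := telescope z A B (fun _ => (1:ℝ)) hzA hzB hzI hIcl hharm1 N
      have hb : ∑ j ∈ Finset.range N,
          stepProb (j+1) (fun σ => pos z σ (j+1) ∈ A ∧ ∀ m < j+1, pos z σ m ∉ A ∧ pos z σ m ∉ B)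
          ≤ ∑ j ∈ Finset.range N,
            (SH z A B (fun _ => (1:ℝ)) (j+1) + SB z A B (fun _ => (1:ℝ)) (j+1)) / 4 ^ (j+1) := by
        refine Finset.sum_le_sum fun j _ => ?_
        rw [SH_one_eq]
        have h4 : (0:ℝ) < 4 ^ (j+1) := by positivity
        exact (div_le_div_iff_of_pos_right h4).mpr (by linarith [SB_one_nonneg z A B (j+1)])
      have hSA := SA_one_nonneg z A B N
      have h4 : (0:ℝ) < 4 ^ N := by positivity
      have := div_nonneg hSA h4.le
      rw [heP0]
      calc (∑ j ∈ Finset.range N, stepProb (j+1) _) + 0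
          ≤ ∑ j ∈ Finset.range N,
            (SH z A B (fun _ => (1:ℝ)) (j+1) + SB z A B (fun _ => (1:ℝ)) (j+1)) / 4 ^ (j+1) := by
            rw [add_zero]; exact hb
        _ ≤ 1 := by rw [htel] at *; linarith
  have hsum : Summable (fun n => stepProb n
      (fun σ => pos z σ n ∈ A ∧ ∀ m < n, pos z σ m ∉ A ∧ pos z σ m ∉ B)) :=
    summable_of_sum_range_le heP_nn hpart
  -- the alive mass decays geometrically
  have hSAg : ∀ N, SA z A B g N ≤ (4*ρ)^N * g z := by
    intro N
    induction N with
    | zero =>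
      rw [SA_zero z A B g hzA hzB, pow_zero, one_mul]
    | succ N ih =>
      calc SA z A B g (N+1) ≤ (4*ρ) * SA z A B g N :=
            SA_g_decay z A B g ρ hzI hIcl hgeig hgnn N
        _ ≤ (4*ρ) * ((4*ρ)^N * g z) := by
            apply mul_le_mul_of_nonneg_left ih (by linarith)
        _ = (4*ρ)^(N+1) * g z := by ring
  -- main bound for each N
  have hmain : ∀ N : ℕ, u z ≤ 2 * ρ^N + ∑ j ∈ Finset.range (N+1),
      stepProb j (fun σ => pos z σ j ∈ A ∧ ∀ m < j, pos z σ m ∉ A ∧ pos z σ m ∉ B) := by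
    intro N
    have htel := telescope z A B u hzA hzB hzI hIcl hharm N
    have h4 : (0:ℝ) < 4 ^ N := by positivity
    have hSA_le : SA z A B u N / 4 ^ N ≤ 2 * ρ^N := by
      have h1 : SA z A B u N ≤ SA z A B (fun p => 2 * g p) N :=
        SA_le_SA z A B u (fun p => 2 * g p) hzI hIcl hu2g N
      rw [SA_two_smul] at h1
      have h2 : SA z A B g N ≤ (4*ρ)^N * g z := hSAg N
      have h3 : (4*ρ)^N * g z ≤ (4*ρ)^N := by
        have : (0:ℝ) ≤ (4*ρ)^N := by positivity
        nlinarith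
      rw [div_le_iff₀ h4]
      have h5 : (4*ρ)^N = ρ^N * 4^N := by
        rw [mul_pow]; ring
      nlinarith [h1, h2, h3]
    have hterm : ∀ j ∈ Finset.range N, (SH z A B u (j+1) + SB z A B u (j+1)) / 4 ^ (j+1)
        ≤ stepProb (j+1) (fun σ => pos z σ (j+1) ∈ A
            ∧ ∀ m < j+1, pos z σ m ∉ A ∧ pos z σ m ∉ B) := by
      intro j _
      rw [SH_one_eq]
      have h4' : (0:ℝ) < 4 ^ (j+1) := by positivity
      apply (div_le_div_iff_of_pos_right h4').mpr
      have := SH_le_one z A B u hzI hIcl hA1 j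
      have := SB_nonpos z A B u hzI hIcl hB0 j
      linarith
    rw [Finset.sum_range_succ', heP0, add_zero]
    calc u z = SA z A B u N / 4^N
        + ∑ j ∈ Finset.range N, (SH z A B u (j+1) + SB z A B u (j+1)) / 4 ^ (j+1) := htel
      _ ≤ 2 * ρ^N + ∑ j ∈ Finset.range N,
          stepProb (j+1) (fun σ => pos z σ (j+1) ∈ A
            ∧ ∀ m < j+1, pos z σ m ∉ A ∧ pos z σ m ∉ B) := by
          exact add_le_add hSA_le (Finset.sum_le_sum hterm)
  have hbound : ∀ N : ℕ, u z ≤ 2 * ρ^N + hitLeProb z A B := by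
    intro N
    refine (hmain N).trans (add_le_add_right ?_ _)
    exact Summable.sum_le_tsum (Finset.range (N+1)) (fun n _ => heP_nn n) hsum
  have hlim : Tendsto (fun N : ℕ => 2 * ρ^N + hitLeProb z A B) atTop
      (nhds (hitLeProb z A B)) := by
    have h0 : Tendsto (fun N : ℕ => ρ^N) atTop (nhds 0) :=
      tendsto_pow_atTop_nhds_zero_of_lt_one hρ0 hρ1
    have := (h0.const_mul 2).add_const (hitLeProb z A B)
    simpa using this
  exact ge_of_tendsto' hlim hbound

end Aux

lemma cosh_quad_lb (x : ℝ) : 1 + x^2/2 ≤ Real.cosh x := by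
  have h1 : Real.cosh x = 1 + 2 * Real.sinh (x/2)^2 := by
    have h2 : x = 2 * (x/2) := by ring
    nth_rewrite 1 [h2]
    rw [Real.cosh_two_mul, Real.cosh_sq]
    ring
  rw [h1]
  rcases le_total 0 x with hx | hx
  · have := Real.self_le_sinh_iff.mpr (by linarith : (0:ℝ) ≤ x/2)
    nlinarith
  · have h3 : Real.sinh (x/2) ≤ x/2 := Real.sinh_le_self_iff.mpr (by linarith)
    nlinarith

lemma cosh_self_le (x : ℝ) (hx : 0 ≤ x) : x ≤ Real.cosh x := by
  have := cosh_quad_lb x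
  nlinarith

lemma cosh_quad_ub {x : ℝ} (h : |x| ≤ 1) : Real.cosh x ≤ 1 + (3/4) * x^2 := by
  have h1 := Real.exp_bound h (n := 2) (by norm_num)
  have h2 := Real.exp_bound (x := -x) (by rwa [abs_neg]) (n := 2) (by norm_num)
  have hs : ∑ m ∈ Finset.range 2, x ^ m / (m.factorial : ℝ) = 1 + x := by
    simp [Finset.sum_range_succ]
  have hs2 : ∑ m ∈ Finset.range 2, (-x) ^ m / (m.factorial : ℝ) = 1 - x := by
    simp [Finset.sum_range_succ]
    ring
  rw [hs] at h1
  rw [hs2] at h2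
  have hb1 : Real.exp x ≤ 1 + x + x^2 * (3/4) := by
    have h3 := (abs_le.mp h1).2
    norm_num [Nat.factorial] at h3
    linarith
  have hb2 : Real.exp (-x) ≤ 1 - x + x^2 * (3/4) := by
    have h3 := (abs_le.mp h2).2
    norm_num [Nat.factorial] at h3
    linarith
  have hcosh : Real.cosh x = (Real.exp x + Real.exp (-x)) / 2 := Real.cosh_eq x
  rw [hcosh]
  have habs : |x|^2 = x^2 := sq_abs x
  nlinarith

lemma cos_ge_half {x : ℝ} (h : |x| ≤ 3/4) : 1/2 ≤ Real.cos x := by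
  have h1 := Real.one_sub_sq_div_two_le_cos (x := x)
  have h2 : x^2 ≤ (3/4)^2 := by
    have := abs_nonneg x
    nlinarith [sq_abs x, abs_le.mp h]
  nlinarith

/-- main packaged facts about `ω = arccos (2 - cosh a)` for small `a`. -/
lemma omega_facts {a : ℝ} (ha0 : 0 < a) (ha : a ≤ 1/8) :
    Real.cos (Real.arccos (2 - Real.cosh a)) = 2 - Real.cosh a ∧
    0 ≤ Real.arccos (2 - Real.cosh a) ∧
    Real.arccos (2 - Real.cosh a) ≤ (3/2) * a ∧
    Real.cos (Real.arccos (2 - Real.cosh a)) < 1 ∧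
    1/2 ≤ Real.cos (Real.arccos (2 - Real.cosh a)) := by
  have haa : |a| ≤ 1 := by rw [abs_of_pos ha0]; linarith
  have hub : Real.cosh a ≤ 1 + (3/4) * a^2 := cosh_quad_ub haa
  have hub' : Real.cosh a ≤ 3/2 := by nlinarith
  have hlb : 1 < Real.cosh a := Real.one_lt_cosh.mpr (ne_of_gt ha0)
  have hx1 : -1 ≤ 2 - Real.cosh a := by linarith
  have hx2 : 2 - Real.cosh a ≤ 1 := by linarith
  have hcos : Real.cos (Real.arccos (2 - Real.cosh a)) = 2 - Real.cosh a :=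
    Real.cos_arccos hx1 hx2
  set ω := Real.arccos (2 - Real.cosh a) with hω
  have hω0 : 0 ≤ ω := Real.arccos_nonneg _
  have hωle : ω ≤ Real.pi / 2 := Real.arccos_le_pi_div_two.mpr (by linarith)
  have hπ : Real.pi < 3.15 := by
    have := Real.pi_lt_d2
    linarith
  have hω1 : ω / 2 ≤ 79/100 := by linarith
  have homega : ω ≤ (3/2) * a := by
    rcases eq_or_lt_of_le hω0 with heq | hpos
    · rw [← heq]; positivity
    · -- 1 - cos ω = 2 sin(ω/2)^2 ≥ (2*(21/25)^2/4) ω²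
      have hsin : (ω/2) - (ω/2)^3 / 4 < Real.sin (ω/2) :=
        by have := Real.sin_gt_sub_cube (x := ω/2) (by linarith)
           nlinarith [pow_pos (by linarith : (0:ℝ) < ω/2) 3]
      have hcube : (ω/2)^3 / 4 ≤ (ω/2) * (79/100)^2 / 4 := by
        have h1 : (ω/2)^2 ≤ (79/100)^2 := by nlinarith
        nlinarith
      have hsin2 : (21/25) * (ω/2) ≤ Real.sin (ω/2) := by nlinarith
      have hid : Real.cos ω = 1 - 2 * Real.sin (ω/2)^2 := by
        have h2 : ω = 2 * (ω/2) := by ring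
        have hpy := Real.sin_sq_add_cos_sq (ω/2)
        nth_rewrite 1 [h2]
        rw [Real.cos_two_mul]
        linarith
      have hsinnn : 0 ≤ Real.sin (ω/2) := by nlinarith
      have hsq : (441/625) * (ω/2)^2 ≤ Real.sin (ω/2)^2 := by nlinarith
      have h2sin : 2 * Real.sin (ω/2)^2 = Real.cosh a - 1 := by
        rw [hcos] at hid
        linarith
      have he : (ω/2)^2 = ω^2/4 := by ring
      rw [he] at hsq
      have hωsq : ω^2 ≤ (9/4) * a^2 := by linarith
      by_contra hgt
      push_neg at hgt
      have hmul := mul_self_lt_mul_self (by linarith : (0:ℝ) ≤ 3/2*a) hgt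
      have he2 : (3/2*a) * (3/2*a) = (9/4) * a^2 := by ring
      have he3 : ω * ω = ω^2 := by ring
      rw [he2, he3] at hmul
      linarith
  exact ⟨hcos, hω0, homega, by linarith, by linarith⟩


lemma numeric_key (t P Q c HH : ℝ) (ht : 3 ≤ t) (hP : P = (2:ℝ)^(-t)) (hQ : 2 ≤ Q)
    (hc1 : 1 ≤ c) (hcub : c ≤ 2*(Q*P)) (hHH : HH = 2*Q - c) (hHlb : Q ≤ HH) :
    (1/2 - 2*P + 8*P^2) * HH ≤ Q - c := by
  have hPpos : 0 < P := by rw [hP]; positivity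
  have hP8 : P ≤ 1/8 := by
    rw [hP]
    calc (2:ℝ)^(-t) ≤ (2:ℝ)^(-3:ℝ) :=
          Real.rpow_le_rpow_of_exponent_le (by norm_num) (by linarith)
      _ = 1/8 := by
          rw [show (-3:ℝ) = ((-3:ℤ):ℝ) by norm_num, Real.rpow_intCast]
          norm_num
  rw [hHH]
  nlinarith [mul_nonneg hPpos.le (sub_nonneg.mpr hcub), sq_nonneg P,
    mul_nonneg (mul_nonneg hPpos.le hPpos.le) (by linarith : (0:ℝ) ≤ Q),
    mul_nonneg hPpos.le (by linarith : (0:ℝ) ≤ c)]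

set_option maxHeartbeats 2000000 in
/-- **Escape probability through a wedge between consecutive dyadic levels.**
There exists `δ ∈ (0,1)` such that for all `α > 1`, with `β = 4/(α+3)`,
`γ = 2(α−1)/(α+3)`, `α₁ = β + γ`, and every positive integer `k` with
`2⌈2^{βk}⌉ ≤ 2^k` and `2^{(α₁−1)k−2} ≥ 2`, the simple random walk started at `(0, 2^k)`
satisfies
`P(τ̄_{L_{2^{k+1}}} ≤ τ̄_{ℤ²\W₀}) ≥ 1/2 − 2^{(β−1)k+1} − (1−δ)^{2^{(α₁−1)k−2}}`. -/
theorem escape_wedge_prob_ge :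
    ∃ δ : ℝ, 0 < δ ∧ δ < 1 ∧
      ∀ α β γ α₁ : ℝ, 1 < α → β = 4 / (α + 3) → γ = 2 * (α - 1) / (α + 3) → α₁ = β + γ →
        ∀ k : ℕ, 0 < k →
          2 * ⌈(2 : ℝ) ^ (β * k)⌉ ≤ (2 : ℤ) ^ k →
          (2 : ℝ) ≤ (2 : ℝ) ^ ((α₁ - 1) * k - 2) →
          1 / 2 - (2 : ℝ) ^ ((β - 1) * k + 1) - (1 - δ) ^ ((2 : ℝ) ^ ((α₁ - 1) * k - 2))
            ≤ hitLeProb ((0 : ℤ), (2 : ℤ) ^ k) (lineH ((2 : ℤ) ^ (k + 1))) (wedgeW₀ β γ k)ᶜ := by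
  refine ⟨1/2, by norm_num, by norm_num, ?_⟩
  intro α β γ α₁ hα hβd hγd hα₁d k hk hceil hT
  have hα3 : (0:ℝ) < α + 3 := by linarith
  obtain ⟨t, ht_def⟩ : ∃ t : ℝ, t = (α₁ - 1) * (k:ℝ) := ⟨_, rfl⟩
  have hβ1 : (β - 1) * (k:ℝ) + 1 = 1 - t := by
    rw [ht_def, hα₁d, hβd, hγd]; field_simp; ring
  have hγk : γ * (k:ℝ) = 2 * t := by
    rw [ht_def, hα₁d, hβd, hγd]; field_simp; ring
  have hβk : β * (k:ℝ) = (k:ℝ) - t := by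
    rw [ht_def, hα₁d, hβd, hγd]; field_simp; ring
  have hk1 : (1:ℝ) ≤ (k:ℝ) := by exact_mod_cast hk
  have ht3 : 3 ≤ t := by
    have h1 : (2:ℝ)^(1:ℝ) ≤ (2:ℝ)^((α₁ - 1) * (k:ℝ) - 2) := by rwa [Real.rpow_one]
    have h2 := (Real.rpow_le_rpow_left_iff (by norm_num : (1:ℝ) < 2)).mp h1
    rw [← ht_def] at h2
    linarith
  obtain ⟨P, hP_def⟩ : ∃ P : ℝ, P = (2:ℝ)^(-t) := ⟨_, rfl⟩
  have hPpos : 0 < P := by rw [hP_def]; positivity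
  have hP8 : P ≤ 1/8 := by
    rw [hP_def]
    calc (2:ℝ)^(-t) ≤ (2:ℝ)^(-3:ℝ) :=
          Real.rpow_le_rpow_of_exponent_le (by norm_num) (by linarith)
      _ = 1/8 := by
          rw [show (-3:ℝ) = ((-3:ℤ):ℝ) by norm_num, Real.rpow_intCast]; norm_num
  obtain ⟨Q, hQ_def⟩ : ∃ Q : ℝ, Q = (2:ℝ)^k := ⟨_, rfl⟩
  have hQpos : 0 < Q := by rw [hQ_def]; positivity
  have hQ2 : 2 ≤ Q := by
    rw [hQ_def]
    calc (2:ℝ) = 2^1 := by norm_num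
      _ ≤ 2^k := pow_le_pow_right₀ (by norm_num) hk
  obtain ⟨c, hc_def⟩ : ∃ c : ℝ, c = ((⌈(2:ℝ)^(β * (k:ℝ))⌉ : ℤ) : ℝ) := ⟨_, rfl⟩
  have hrpow_pos : (0:ℝ) < (2:ℝ)^(β * (k:ℝ)) := Real.rpow_pos_of_pos (by norm_num) _
  have hc1 : (1:ℝ) ≤ c := by
    rw [hc_def]
    have h1 : (0:ℤ) < ⌈(2:ℝ)^(β * (k:ℝ))⌉ := Int.ceil_pos.mpr hrpow_pos
    exact_mod_cast h1
  have hrpow_eq : (2:ℝ)^(β * (k:ℝ)) = Q * P := by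
    rw [hβk, sub_eq_add_neg, Real.rpow_add (by norm_num : (0:ℝ) < 2), Real.rpow_natCast,
      hP_def, hQ_def]
  have hcub : c ≤ 2 * (Q * P) := by
    have h1 : c < (2:ℝ)^(β * (k:ℝ)) + 1 := by rw [hc_def]; exact Int.ceil_lt_add_one _
    have h2 : (1:ℝ) ≤ (2:ℝ)^(β * (k:ℝ)) := by
      have h0 : (0:ℝ) ≤ β * (k:ℝ) := by rw [hβd]; positivity
      calc (1:ℝ) = (2:ℝ)^(0:ℝ) := by rw [Real.rpow_zero]
        _ ≤ (2:ℝ)^(β * (k:ℝ)) := Real.rpow_le_rpow_of_exponent_le (by norm_num) h0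
    rw [hrpow_eq] at h1 h2
    linarith
  have h2cQ : 2 * c ≤ Q := by
    have h1 : ((2 * ⌈(2:ℝ)^(β * (k:ℝ))⌉ : ℤ) : ℝ) ≤ (((2:ℤ)^k : ℤ) : ℝ) := by exact_mod_cast hceil
    push_cast at h1
    rw [hc_def, hQ_def]
    push_cast
    linarith
  obtain ⟨HH, hHH_def⟩ : ∃ HH : ℝ, HH = 2 * Q - c := ⟨_, rfl⟩
  have hHlb : Q ≤ HH := by rw [hHH_def]; linarith
  have hHpos : 0 < HH := by linarith
  have hHub : HH ≤ 2 * Q := by rw [hHH_def]; linarith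
  obtain ⟨aa, haa_def⟩ : ∃ aa : ℝ, aa = 1 / (4 * Q) := ⟨_, rfl⟩
  have haa0 : 0 < aa := by rw [haa_def]; positivity
  have haa8 : aa ≤ 1/8 := by
    rw [haa_def, div_le_div_iff₀ (by positivity) (by norm_num)]
    linarith
  have haaQ : aa * (4 * Q) = 1 := by rw [haa_def]; field_simp
  obtain ⟨ω, hω_def⟩ : ∃ ω : ℝ, ω = Real.arccos (2 - Real.cosh aa) := ⟨_, rfl⟩
  obtain ⟨hcosω, hω0, hωle, hcoslt1, hcosge⟩ := omega_facts haa0 haa8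
  rw [← hω_def] at hcosω hω0 hωle hcoslt1 hcosge
  have hω316 : ω ≤ 3/16 := by nlinarith
  have hωHH : ω * HH ≤ 3/4 := by
    calc ω * HH ≤ (3/2 * aa) * (2 * Q) := by
          apply mul_le_mul hωle hHub hHpos.le (by positivity)
      _ = 3/4 * (aa * (4 * Q)) := by ring
      _ = 3/4 := by rw [haaQ]; ring
  obtain ⟨m', hm'_def⟩ : ∃ m' : ℝ, m' = (2:ℝ)^(-(γ * (k:ℝ))) := ⟨_, rfl⟩
  have hm'pos : 0 < m' := by rw [hm'_def]; positivity
  have hm'P : m' = P^2 := by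
    rw [hm'_def, hP_def, hγk, sq, ← Real.rpow_add (by norm_num : (0:ℝ) < 2)]
    ring_nf
  obtain ⟨Amp, hAmp_def⟩ : ∃ Amp : ℝ, Amp = 8 * m' := ⟨_, rfl⟩
  have hAmp_pos : 0 < Amp := by rw [hAmp_def]; positivity
  -- the sets, the starting point, the harmonic functions
  obtain ⟨z, hz_def⟩ : ∃ z : ℤ × ℤ, z = ((0 : ℤ), (2:ℤ)^k) := ⟨_, rfl⟩
  obtain ⟨uF, huF_def⟩ : ∃ uF : ℤ × ℤ → ℝ, uF = fun p =>
      ((p.2:ℝ) - c)/HH - Amp * Real.cosh (aa * (p.1:ℝ)) * Real.cos (ω * ((p.2:ℝ) - c)) :=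
    ⟨_, rfl⟩
  obtain ⟨gF, hgF_def⟩ : ∃ gF : ℤ × ℤ → ℝ, gF = fun p =>
      Real.cos (ω * ((p.2:ℝ) - c)) := ⟨_, rfl⟩
  obtain ⟨ρ, hρ_def⟩ : ∃ ρ : ℝ, ρ = (1 + Real.cos ω)/2 := ⟨_, rfl⟩
  obtain ⟨Ginv, hGinv_def⟩ : ∃ Ginv : Set (ℤ × ℤ),
      Ginv = {p : ℤ × ℤ | p ∈ wedgeW₀ β γ k ∧ p.2 < (2:ℤ)^(k+1)} := ⟨_, rfl⟩
  -- cast facts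
  have hcastQ : (((2:ℤ)^k : ℤ) : ℝ) = Q := by rw [hQ_def]; push_cast; ring
  have hcast2Q : (((2:ℤ)^(k+1) : ℤ) : ℝ) = 2 * Q := by rw [hQ_def]; push_cast; ring
  have hmemW : ∀ p : ℤ × ℤ, p ∈ wedgeW₀ β γ k ↔
      (0 ≤ p.2 ∧ |(p.1:ℝ)| * m' ≤ (p.2:ℝ) - c) := by
    intro p
    rw [hm'_def, hc_def]
    exact Iff.rfl
  have hmemA : ∀ p : ℤ × ℤ, p ∈ lineH ((2:ℤ)^(k+1)) ↔ p.2 = (2:ℤ)^(k+1) := fun p => Iff.rfl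
  -- bounds from Ginv membership
  have hGinv_bounds : ∀ p ∈ Ginv, c ≤ (p.2:ℝ) ∧ (p.2:ℝ) ≤ 2*Q - 1 := by
    intro p hp
    rw [hGinv_def] at hp
    obtain ⟨hw, hlt⟩ := hp
    rw [hmemW] at hw
    constructor
    · have h1 := hw.2
      have habs : 0 ≤ |(p.1:ℝ)| * m' := by positivity
      linarith
    · have h1 : p.2 + 1 ≤ (2:ℤ)^(k+1) := hlt
      have h2 : ((p.2 + 1 : ℤ) : ℝ) ≤ (((2:ℤ)^(k+1) : ℤ) : ℝ) := by exact_mod_cast h1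
      rw [hcast2Q] at h2
      push_cast at h2
      linarith
  -- cosine lower bound in the strip
  have hcos_arg : ∀ s : ℝ, -1 ≤ s → s ≤ HH → 1/2 ≤ Real.cos (ω * s) := by
    intro s hs1 hs2
    apply cos_ge_half
    rw [abs_le]
    constructor
    · rcases le_total s 0 with h | h
      · have h1 : ω * (-1) ≤ ω * s := mul_le_mul_of_nonneg_left hs1 hω0
        linarith
      · have h1 : 0 ≤ ω * s := mul_nonneg hω0 h
        linarith
    · rcases le_total s 0 with h | h
      · have h1 : ω * s ≤ 0 := mul_nonpos_of_nonneg_of_nonpos hω0 h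
        linarith
      · have h1 : ω * s ≤ ω * HH := mul_le_mul_of_nonneg_left hs2 hω0
        linarith
  -- membership of z
  have hzW : z ∈ wedgeW₀ β γ k := by
    rw [hmemW, hz_def]
    refine ⟨by positivity, ?_⟩
    simp only
    push_cast
    rw [abs_zero, zero_mul, ← hQ_def]
    linarith
  have hzA : z ∉ lineH ((2:ℤ)^(k+1)) := by
    rw [hmemA, hz_def]
    simp only
    have h1 : (0:ℤ) < 2^k := by positivity
    rw [pow_succ]
    intro h
    omega
  have hzB : z ∉ (wedgeW₀ β γ k)ᶜ := by
    rw [Set.notMem_compl_iff]; exact hzW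
  have hzI : z ∈ Ginv := by
    rw [hGinv_def]
    refine ⟨hzW, ?_⟩
    rw [hz_def]
    simp only
    have h1 : (0:ℤ) < 2^k := by positivity
    rw [pow_succ]
    omega
  -- Ginv is closed under admissible steps
  have hIcl : ∀ p ∈ Ginv, ∀ d ∈ dirs, p + d ∉ lineH ((2:ℤ)^(k+1)) →
      p + d ∉ (wedgeW₀ β γ k)ᶜ → p + d ∈ Ginv := by
    intro p hp d hd hA' hB'
    rw [hGinv_def]
    refine ⟨Set.notMem_compl_iff.mp hB', ?_⟩
    rw [hGinv_def] at hp
    rw [hmemA] at hA'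
    have hd2 : d.2 = 1 ∨ d.2 = 0 ∨ d.2 = -1 := by fin_cases hd <;> simp
    have hlt := hp.2
    have hsnd : (p + d).2 = p.2 + d.2 := rfl
    rcases hd2 with h | h | h <;> (rw [hsnd, h] at hA' ⊢) <;> omega
  -- key trigonometric identities
  have hE3 : Real.cosh aa + Real.cos ω = 2 := by rw [hcosω]; ring
  have key4 : ∀ X Y : ℝ,
      ((Y - c)/HH - Amp * Real.cosh (aa * (X + 1)) * Real.cos (ω * (Y - c)))
      + ((Y - c)/HH - Amp * Real.cosh (aa * (X - 1)) * Real.cos (ω * (Y - c)))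
      + ((Y + 1 - c)/HH - Amp * Real.cosh (aa * X) * Real.cos (ω * (Y + 1 - c)))
      + ((Y - 1 - c)/HH - Amp * Real.cosh (aa * X) * Real.cos (ω * (Y - 1 - c)))
      = 4 * ((Y - c)/HH - Amp * Real.cosh (aa * X) * Real.cos (ω * (Y - c))) := by
    intro X Y
    have E1 : Real.cosh (aa * (X + 1)) + Real.cosh (aa * (X - 1))
        = 2 * Real.cosh (aa * X) * Real.cosh aa := by
      rw [show aa * (X + 1) = aa * X + aa by ring, show aa * (X - 1) = aa * X - aa by ring,
        Real.cosh_add, Real.cosh_sub]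
      ring
    have E2 : Real.cos (ω * (Y + 1 - c)) + Real.cos (ω * (Y - 1 - c))
        = 2 * Real.cos (ω * (Y - c)) * Real.cos ω := by
      rw [show ω * (Y + 1 - c) = ω * (Y - c) + ω by ring,
        show ω * (Y - 1 - c) = ω * (Y - c) - ω by ring,
        Real.cos_add, Real.cos_sub]
      ring
    linear_combination (-(Amp * Real.cos (ω * (Y - c)))) * E1
      + (-(Amp * Real.cosh (aa * X))) * E2
      + (-(2 * Amp * Real.cosh (aa * X) * Real.cos (ω * (Y - c)))) * hE3
  have key2 : ∀ Y : ℝ,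
      Real.cos (ω * (Y - c)) + Real.cos (ω * (Y - c))
      + Real.cos (ω * (Y + 1 - c)) + Real.cos (ω * (Y - 1 - c))
      = (4 * ρ) * Real.cos (ω * (Y - c)) := by
    intro Y
    have E2 : Real.cos (ω * (Y + 1 - c)) + Real.cos (ω * (Y - 1 - c))
        = 2 * Real.cos (ω * (Y - c)) * Real.cos ω := by
      rw [show ω * (Y + 1 - c) = ω * (Y - c) + ω by ring,
        show ω * (Y - 1 - c) = ω * (Y - c) - ω by ring,
        Real.cos_add, Real.cos_sub]
      ring
    rw [hρ_def]
    linear_combination E2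
  -- the four neighbours of a point
  have hpt1 : ∀ x y : ℤ, (x, y) + ((1:ℤ), (0:ℤ)) = (x + 1, y) := by
    intro x y
    simp [Prod.mk_add_mk]
  have hpt2 : ∀ x y : ℤ, (x, y) + ((-1:ℤ), (0:ℤ)) = (x - 1, y) := by
    intro x y
    simp [Prod.mk_add_mk, sub_eq_add_neg]
  have hpt3 : ∀ x y : ℤ, (x, y) + ((0:ℤ), (1:ℤ)) = (x, y + 1) := by
    intro x y
    simp [Prod.mk_add_mk]
  have hpt4 : ∀ x y : ℤ, (x, y) + ((0:ℤ), (-1:ℤ)) = (x, y - 1) := by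
    intro x y
    simp [Prod.mk_add_mk, sub_eq_add_neg]
  -- harmonicity of uF
  have hharm : ∀ p ∈ Ginv, ∑ d ∈ dirs, uF (p + d) = 4 * uF p := by
    rintro ⟨x, y⟩ _
    rw [sum_dirs_expand (fun d => uF ((x, y) + d)), hpt1, hpt2, hpt3, hpt4, huF_def]
    simp only
    push_cast
    exact key4 (x:ℝ) (y:ℝ)
  -- eigen-relation for gF
  have hgeig : ∀ p ∈ Ginv, ∑ d ∈ dirs, gF (p + d) = (4 * ρ) * gF p := by
    rintro ⟨x, y⟩ _
    rw [sum_dirs_expand (fun d => gF ((x, y) + d)), hpt1, hpt2, hpt3, hpt4, hgF_def]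
    simp only
    push_cast
    exact key2 (y:ℝ)
  -- positivity of gF on neighbours of Ginv
  have hgnn : ∀ p ∈ Ginv, ∀ d ∈ dirs, 0 ≤ gF (p + d) := by
    intro p hp d hd
    obtain ⟨hyl, hyu⟩ := hGinv_bounds p hp
    have hd2 : d.2 = 1 ∨ d.2 = 0 ∨ d.2 = -1 := by fin_cases hd <;> simp
    have hsnd : ((p + d).2 : ℝ) = (p.2 : ℝ) + (d.2 : ℝ) := by
      rw [show (p + d).2 = p.2 + d.2 from rfl]
      push_cast
      ring
    rw [hgF_def]
    simp only
    have hs1 : -1 ≤ ((p + d).2 : ℝ) - c := by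
      rcases hd2 with h | h | h <;> rw [hsnd, h] <;> push_cast <;> linarith
    have hs2 : ((p + d).2 : ℝ) - c ≤ HH := by
      rcases hd2 with h | h | h <;> rw [hsnd, h] <;> push_cast <;> rw [hHH_def] <;> linarith
    have := hcos_arg _ hs1 hs2
    linarith
  -- uF ≤ 2 gF on Ginv
  have hu2g : ∀ p ∈ Ginv, uF p ≤ 2 * gF p := by
    intro p hp
    obtain ⟨hyl, hyu⟩ := hGinv_bounds p hp
    have hs1 : -1 ≤ ((p.2) : ℝ) - c := by linarith
    have hs2 : ((p.2) : ℝ) - c ≤ HH := by rw [hHH_def]; linarith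
    have hcos := hcos_arg _ hs1 hs2
    rw [huF_def, hgF_def]
    simp only
    have hnn : 0 ≤ Amp * Real.cosh (aa * (p.1 : ℝ)) * Real.cos (ω * ((p.2:ℝ) - c)) := by
      apply mul_nonneg (mul_nonneg hAmp_pos.le (Real.cosh_pos _).le)
      linarith
    have hdiv : ((p.2:ℝ) - c)/HH ≤ 1 := by
      rw [div_le_one hHpos]
      linarith
    linarith
  -- gF z ≤ 1
  have hgz : gF z ≤ 1 := by
    rw [hgF_def]
    exact Real.cos_le_one _
  -- exit through the top line
  have hA1 : ∀ p ∈ Ginv, ∀ d ∈ dirs, p + d ∈ lineH ((2:ℤ)^(k+1)) → uF (p + d) ≤ 1 := by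
    intro p hp d hd hq
    rw [hmemA] at hq
    have hq2 : (((p + d).2 : ℤ) : ℝ) = 2 * Q := by rw [hq, hcast2Q]
    rw [huF_def]
    simp only
    rw [hq2, show 2 * Q - c = HH from by rw [hHH_def], div_self hHpos.ne']
    have hcos := hcos_arg HH (by linarith) le_rfl
    have hnn : 0 ≤ Amp * Real.cosh (aa * ((p + d).1 : ℝ)) * Real.cos (ω * HH) := by
      apply mul_nonneg (mul_nonneg hAmp_pos.le (Real.cosh_pos _).le)
      linarith
    linarith
  -- exit through the side of the wedge
  have hB0 : ∀ p ∈ Ginv, ∀ d ∈ dirs, p + d ∉ lineH ((2:ℤ)^(k+1)) →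
      p + d ∈ (wedgeW₀ β γ k)ᶜ → uF (p + d) ≤ 0 := by
    intro p hp d hd hqA hqB
    obtain ⟨hyl, hyu⟩ := hGinv_bounds p hp
    have hd2 : d.2 = 1 ∨ d.2 = 0 ∨ d.2 = -1 := by fin_cases hd <;> simp
    have hsnd : ((p + d).2 : ℝ) = (p.2 : ℝ) + (d.2 : ℝ) := by
      rw [show (p + d).2 = p.2 + d.2 from rfl]
      push_cast
      ring
    have hs1 : c - 1 ≤ ((p + d).2 : ℝ) := by
      rcases hd2 with h | h | h <;> rw [hsnd, h] <;> push_cast <;> linarith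
    have hs2 : ((p + d).2 : ℝ) - c ≤ HH := by
      rcases hd2 with h | h | h <;> rw [hsnd, h] <;> push_cast <;> rw [hHH_def] <;> linarith
    have hq0 : 0 ≤ (p + d).2 := by
      have h1 : (0:ℝ) ≤ ((p + d).2 : ℝ) := by linarith
      exact_mod_cast h1
    have hqW : (p + d) ∉ wedgeW₀ β γ k := Set.mem_compl_iff _ _ |>.mp hqB
    rw [hmemW] at hqW
    push_neg at hqW
    have hside : (((p + d).2 : ℤ) : ℝ) - c < |((p + d).1 : ℝ)| * m' := hqW hq0
    have hcos := hcos_arg _ (by linarith : -1 ≤ (((p+d).2:ℤ):ℝ) - c) hs2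
    rw [huF_def]
    simp only
    rcases le_total ((((p + d).2 : ℤ) : ℝ) - c) 0 with hsgn | hsgn
    · have h1 : ((((p + d).2 : ℤ) : ℝ) - c)/HH ≤ 0 := div_nonpos_of_nonpos_of_nonneg hsgn hHpos.le
      have hnn : 0 ≤ Amp * Real.cosh (aa * ((p + d).1 : ℝ)) * Real.cos (ω * ((((p+d).2:ℤ):ℝ) - c)) := by
        apply mul_nonneg (mul_nonneg hAmp_pos.le (Real.cosh_pos _).le)
        linarith
      linarith
    · set s : ℝ := (((p + d).2 : ℤ) : ℝ) - c with hs_def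
      have hq1 : s / m' ≤ |((p + d).1 : ℝ)| := by
        rw [div_le_iff₀ hm'pos]
        linarith
      have hcosh1 : aa * |((p + d).1 : ℝ)| ≤ Real.cosh (aa * ((p + d).1 : ℝ)) := by
        have h1 : Real.cosh (aa * ((p + d).1 : ℝ)) = Real.cosh (|aa * ((p + d).1 : ℝ)|) :=
          (Real.cosh_abs _).symm
        have h2 : |aa * ((p + d).1 : ℝ)| = aa * |((p + d).1 : ℝ)| := by
          rw [abs_mul, abs_of_pos haa0]
        rw [h1, h2]
        exact cosh_self_le _ (by positivity)
      have hstep1 : aa * (s / m') ≤ Real.cosh (aa * ((p + d).1 : ℝ)) :=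
        le_trans (mul_le_mul_of_nonneg_left hq1 haa0.le) hcosh1
      have hstep2 : Amp * (aa * (s / m')) * (1/2)
          ≤ Amp * Real.cosh (aa * ((p + d).1 : ℝ)) * Real.cos (ω * s) := by
        apply mul_le_mul
        · exact mul_le_mul_of_nonneg_left hstep1 hAmp_pos.le
        · exact hcos
        · norm_num
        · exact mul_nonneg hAmp_pos.le (Real.cosh_pos _).le
      have heq1 : Amp * (aa * (s / m')) * (1/2) = 4 * (aa * s) := by
        rw [hAmp_def]
        field_simp
        ring
      have heq2 : 4 * (aa * s) = s / Q := by
        rw [haa_def]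
        field_simp
      have hfinal : s / HH ≤ s / Q := by
        apply div_le_div_of_nonneg_left hsgn hQpos hHlb
      linarith
  -- the eigenvalue is in [0,1)
  have hρ0 : 0 ≤ ρ := by rw [hρ_def]; linarith only [hcosge]
  have hρ1 : ρ < 1 := by rw [hρ_def]; linarith only [hcoslt1]
  -- apply the engine
  have hEng : uF z ≤ hitLeProb z (lineH ((2:ℤ)^(k+1))) ((wedgeW₀ β γ k)ᶜ) :=
    engine_le z (lineH ((2:ℤ)^(k+1))) ((wedgeW₀ β γ k)ᶜ) uF gF ρ hρ0 hρ1
      hzA hzB hzI hIcl hharm hgeig hgnn hu2g hgz hA1 hB0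
  rw [← hz_def]
  refine le_trans ?_ hEng
  -- final numeric computation
  have e1 : (2:ℝ)^((β - 1) * (k:ℝ) + 1) = 2 * P := by
    rw [hβ1, hP_def, sub_eq_add_neg, Real.rpow_add (by norm_num : (0:ℝ) < 2), Real.rpow_one]
  have e2 : (0:ℝ) < (1 - 1/2)^((2:ℝ)^((α₁ - 1) * (k:ℝ) - 2)) :=
    Real.rpow_pos_of_pos (by norm_num) _
  have hkey := numeric_key t P Q c HH ht3 hP_def hQ2 hc1 hcub hHH_def hHlb
  have hdiv : 1/2 - 2*P + 8*P^2 ≤ (Q - c)/HH := by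
    rw [le_div_iff₀ hHpos]
    exact hkey
  have hAmpP : Amp = 8 * P^2 := by rw [hAmp_def, hm'P]
  have huz : (Q - c)/HH - Amp ≤ uF z := by
    rw [huF_def, hz_def]
    simp only
    push_cast
    rw [mul_zero, Real.cosh_zero, ← hQ_def]
    have hc2 : Real.cos (ω * (Q - c)) ≤ 1 := Real.cos_le_one _
    have h4 := mul_le_mul_of_nonneg_left hc2 hAmp_pos.le
    ring_nf at h4 ⊢
    linarith only [h4]
  rw [e1]
  linarith only [hdiv, hAmpP, huz, e2]

end SHM
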